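/- Let (q*; w*) be a real solution of the system: Σ_{i∈S} w*_i ≥ q* for all minimal winning coalitions S, Σ_{i∈S} w*_i ≤ q* - 1 for all maximal losing coalitions S, q* ≥ 1, and w*_i ≥ 1 for all i. Then for any real λ > 0 such that λ > Σ_{i∈N}(λ w*_i - ⌊λ w*_i⌋), the integer vector W = ⌊λ w*⌋ (componentwise floor) together with Q = ⌊λ(q*-1)⌋ + 1 satisfies Σ_{i∈S} W_i ≥ Q for every minimal winning coalition S and Σ_{i∈S} W_i ≤ Q - 1 for every maximal losing coalition S. -/

import Mathlib

theorem stmt_10 {n : ℕ} (Wmin Lmax : Set (Finset (Fin n)))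
    (w : Fin n → ℝ) (q : ℝ)
    (hq : 1 ≤ q) (hw : ∀ i, 1 ≤ w i)
    (hWin : ∀ S ∈ Wmin, q ≤ ∑ i ∈ S, w i)
    (hLose : ∀ S ∈ Lmax, ∑ i ∈ S, w i ≤ q - 1)
    (lam : ℝ) (hlam : 0 < lam)
    (hfrac : ∑ i : Fin n, (lam * w i - ⌊lam * w i⌋) < lam) :
    (∀ S ∈ Wmin, ⌊lam * (q - 1)⌋ + 1 ≤ ∑ i ∈ S, ⌊lam * w i⌋) ∧
    (∀ S ∈ Lmax, ∑ i ∈ S, ⌊lam * w i⌋ ≤ (⌊lam * (q - 1)⌋ + 1) - 1) := by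
  constructor
  · intro S hS
    have h1 : ∑ i ∈ S, (lam * w i - ⌊lam * w i⌋) ≤
        ∑ i : Fin n, (lam * w i - ⌊lam * w i⌋) := by
      apply Finset.sum_le_sum_of_subset_of_nonneg (Finset.subset_univ S)
      intro i _ _
      have := Int.floor_le (lam * w i)
      linarith
    have h2 : lam * q ≤ ∑ i ∈ S, lam * w i := by
      rw [← Finset.mul_sum]
      exact mul_le_mul_of_nonneg_left (hWin S hS) hlam.le
    have h3 : lam * (q - 1) < (∑ i ∈ S, ⌊lam * w i⌋ : ℤ) := by
      have : (∑ i ∈ S, (⌊lam * w i⌋ : ℝ)) = ∑ i ∈ S, lam * w i - ∑ i ∈ S, (lam * w i - ⌊lam * w i⌋) := by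
        rw [← Finset.sum_sub_distrib]; exact Finset.sum_congr rfl fun i _ => by ring
      push_cast
      rw [this]
      nlinarith
    have := Int.floor_lt.mpr h3
    omega
  · intro S hS
    have h2 : ∑ i ∈ S, lam * w i ≤ lam * (q - 1) := by
      rw [← Finset.mul_sum]
      exact mul_le_mul_of_nonneg_left (hLose S hS) hlam.le
    have h3 : ((∑ i ∈ S, ⌊lam * w i⌋ : ℤ) : ℝ) ≤ lam * (q - 1) := by
      push_cast
      refine le_trans (Finset.sum_le_sum fun i _ => Int.floor_le (lam * w i)) h2
    have := Int.le_floor.mpr h3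
    omega
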